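/- In the Kovalevskaya case (A = diag(2,2,1), e = (1,0,0)), the Kovalevskaya function K = (ω₁² − ω₂² + ν₁)² + (2ω₁ω₂ + ν₂)² is a first integral: its time derivative vanishes along every solution of the equations ν̇ = ν × ω, 2ω̇₁ = ω₂ω₃, 2ω̇₂ = −ω₁ω₃ − ν₃, ω̇₃ = ν₂. -/

import Mathlib

/-- In the Kovalevskaya case, `K = (ω₁² − ω₂² + ν₁)² + (2ω₁ω₂ + ν₂)²`
is a first integral of the equations of motion. -/
theorem kovalevskaya_integral_conserved
    (ν1 ν2 ν3 ω1 ω2 ω3 ν1' ν2' ν3' ω1' ω2' ω3' : ℝ → ℝ)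
    (hν1 : ∀ t, HasDerivAt ν1 (ν1' t) t)
    (hν2 : ∀ t, HasDerivAt ν2 (ν2' t) t)
    (hν3 : ∀ t, HasDerivAt ν3 (ν3' t) t)
    (hω1 : ∀ t, HasDerivAt ω1 (ω1' t) t)
    (hω2 : ∀ t, HasDerivAt ω2 (ω2' t) t)
    (hω3 : ∀ t, HasDerivAt ω3 (ω3' t) t)
    (e1 : ∀ t, ν1' t = ν2 t * ω3 t - ν3 t * ω2 t)
    (e2 : ∀ t, ν2' t = ν3 t * ω1 t - ν1 t * ω3 t)
    (e3 : ∀ t, ν3' t = ν1 t * ω2 t - ν2 t * ω1 t)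
    (e4 : ∀ t, 2 * ω1' t = ω2 t * ω3 t)
    (e5 : ∀ t, 2 * ω2' t = -(ω1 t * ω3 t) - ν3 t)
    (e6 : ∀ t, ω3' t = ν2 t) :
    ∀ t, HasDerivAt
      (fun s => ((ω1 s)^2 - (ω2 s)^2 + ν1 s)^2 + (2 * ω1 s * ω2 s + ν2 s)^2) 0 t := by
  intro t
  have h := (((((hω1 t).pow 2).sub ((hω2 t).pow 2)).add (hν1 t)).pow 2).add
    (((((hω1 t).const_mul 2).mul (hω2 t)).add (hν2 t)).pow 2)
  convert h using 1
  · rfl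
  · rfl
  · rfl
  have h1 : ω1' t = ω2 t * ω3 t / 2 := by linarith [e4 t]
  have h2 : ω2' t = (-(ω1 t * ω3 t) - ν3 t) / 2 := by linarith [e5 t]
  rw [h1, h2, e1 t, e2 t]
  simp only [Pi.add_apply, Pi.sub_apply, Pi.pow_apply, Pi.mul_apply]
  ring
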